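/- If ω is a Borel probability measure on X satisfying the superstability estimate, then for every sufficiently small λ > 0 one has lim_{N→+∞} e^{λN} ω({x : Q(x) > N}) = 0. -/

import Mathlib

open MeasureTheory Real Filter
open scoped ENNReal

noncomputable section

/-- A site of the `d`-dimensional integer lattice. -/
abbrev Site (d : ℕ) := Fin d → ℤ

/-- A configuration: at each site, a position `q` and a momentum `p`. -/
abbrev Conf (d : ℕ) := Site d → ℝ × ℝ

/-- ℓ¹ norm on the lattice. -/
def lnorm {d : ℕ} (ν : Site d) : ℤ := ∑ ℓ, |ν ℓ|

/-- ℓ¹ distance on the lattice. -/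
def ldist {d : ℕ} (i j : Site d) : ℤ := ∑ ℓ, |i ℓ - j ℓ|

/-- The cube `Λ_{ν,k}` of center `ν` and side `2k+1`. -/
def cube {d : ℕ} (ν : Site d) (k : ℕ) : Finset (Site d) :=
  Fintype.piFinset fun ℓ => Finset.Icc (ν ℓ - (k : ℤ)) (ν ℓ + (k : ℤ))

/-- The local energy `W_{ν,k}(x)`. -/
noncomputable def Wen {d : ℕ} (U : Polynomial ℝ) (K : ℝ) (ν : Site d) (k : ℕ)
    (x : Conf d) : ℝ :=
  (∑ i ∈ cube ν k, ((x i).2 ^ 2 / 2 + U.eval (x i).1 + 1)) +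
    K / 4 * ∑ i ∈ cube ν k, ∑ j ∈ cube ν k,
      (if ldist i j = 1 then ((x i).1 - (x j).1) ^ 2 else 0)

/-- The functional `Q(x) = sup_ν sup_{k > log^{1/d}(e+|ν|)} W_{ν,k}(x)/(2k+1)^d`,
with values in `[0,∞]`. -/
noncomputable def Qen {d : ℕ} (U : Polynomial ℝ) (K : ℝ) (x : Conf d) : ℝ≥0∞ :=
  ⨆ ν : Site d, ⨆ k : ℕ,
    ⨆ _ : Real.log (Real.exp 1 + (lnorm ν : ℝ)) ^ ((1 : ℝ) / (d : ℝ)) < (k : ℝ),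
      ENNReal.ofReal (Wen U K ν k x / (2 * (k : ℝ) + 1) ^ d)

/-- The good set of configurations `X₀ = {x : Q(x) < ∞}`. -/
def X0 (d : ℕ) (U : Polynomial ℝ) (K : ℝ) : Set (Conf d) := {x | Qen U K x < ⊤}

/-- Superstability estimate for a measure `ω` with constants `Cw`, `lam0`:
`∫ e^{λ W_{ν,k}} dω ≤ e^{Cw (2k+1)^d}` for all `ν`, `k` and `0 < λ ≤ lam0`. -/
def Superstable {d : ℕ} (U : Polynomial ℝ) (K : ℝ) (ω : Measure (Conf d))
    (Cw lam0 : ℝ) : Prop :=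
  ∀ (ν : Site d) (k : ℕ) (lam : ℝ), 0 < lam → lam ≤ lam0 →
    ∫⁻ x, ENNReal.ofReal (Real.exp (lam * Wen U K ν k x)) ∂ω
      ≤ ENNReal.ofReal (Real.exp (Cw * (2 * (k : ℝ) + 1) ^ d))

lemma meas_Wen {d : ℕ} (U : Polynomial ℝ) (K : ℝ) (ν : Site d) (k : ℕ) :
    Measurable (Wen U K ν k) := by
  unfold Wen
  apply Measurable.add
  · apply Finset.measurable_sum
    intro i _
    exact (((measurable_snd.comp (measurable_pi_apply i)).pow_const 2).div_const 2).add
      ((U.continuous_aeval.measurable.comp (measurable_fst.comp (measurable_pi_apply i)))) |>.add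
      measurable_const
  · apply Measurable.const_mul
    apply Finset.measurable_sum
    intro i _
    apply Finset.measurable_sum
    intro j _
    by_cases h : ldist i j = 1 <;> simp [h]
    exact ((measurable_fst.comp (measurable_pi_apply i)).sub
      (measurable_fst.comp (measurable_pi_apply j))).pow_const 2

lemma card_cube {d : ℕ} (M : ℕ) : (cube (0 : Site d) M).card = (2 * M + 1) ^ d := by
  unfold cube
  rw [Fintype.card_piFinset]
  simp [Int.card_Icc]
  congr 1
  omega

lemma cheby {d : ℕ} (U : Polynomial ℝ) (K : ℝ) (ω : Measure (Conf d))
    (Cw lam0 : ℝ) (hlam0 : 0 < lam0) (hss : Superstable U K ω Cw lam0)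
    (ν : Site d) (k : ℕ) (N : ℝ) :
    ω {x | N * (2 * (k : ℝ) + 1) ^ d < Wen U K ν k x}
      ≤ ENNReal.ofReal (Real.exp ((Cw - lam0 * N) * (2 * (k : ℝ) + 1) ^ d)) := by
  set a : ℝ := N * (2 * (k : ℝ) + 1) ^ d with ha
  set s : Set (Conf d) := {x | a < Wen U K ν k x} with hs
  have hsm : MeasurableSet s := measurableSet_lt measurable_const (meas_Wen U K ν k)
  have key : ENNReal.ofReal (Real.exp (lam0 * a)) * ω s
      ≤ ENNReal.ofReal (Real.exp (Cw * (2 * (k : ℝ) + 1) ^ d)) := by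
    calc ENNReal.ofReal (Real.exp (lam0 * a)) * ω s
        = ∫⁻ _ in s, ENNReal.ofReal (Real.exp (lam0 * a)) ∂ω := (setLIntegral_const s _).symm
      _ ≤ ∫⁻ x in s, ENNReal.ofReal (Real.exp (lam0 * Wen U K ν k x)) ∂ω := by
          apply setLIntegral_mono ((ENNReal.measurable_ofReal.comp
            (Real.measurable_exp.comp ((meas_Wen U K ν k).const_mul lam0))))
          intro x hx
          exact ENNReal.ofReal_le_ofReal (Real.exp_le_exp.2
            (mul_le_mul_of_nonneg_left (le_of_lt hx) hlam0.le))
      _ ≤ ∫⁻ x, ENNReal.ofReal (Real.exp (lam0 * Wen U K ν k x)) ∂ω :=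
          setLIntegral_le_lintegral _ _
      _ ≤ _ := hss ν k lam0 hlam0 le_rfl
  have hc0 : ENNReal.ofReal (Real.exp (lam0 * a)) ≠ 0 := by
    simp [Real.exp_pos]
  have hct : ENNReal.ofReal (Real.exp (lam0 * a)) ≠ ⊤ := ENNReal.ofReal_ne_top
  have key2 : ω s * ENNReal.ofReal (Real.exp (lam0 * a))
      ≤ ENNReal.ofReal (Real.exp (Cw * (2 * (k : ℝ) + 1) ^ d)) := by
    rw [mul_comm]; exact key
  have := (ENNReal.le_div_iff_mul_le (Or.inl hc0) (Or.inl hct)).2 key2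
  refine this.trans (le_of_eq ?_)
  rw [← ENNReal.ofReal_div_of_pos (Real.exp_pos _), ← Real.exp_sub]
  congr 1
  rw [ha]; ring

lemma pow_add_one_le {a : ℝ} (ha : 1 ≤ a) : ∀ {d : ℕ}, 1 ≤ d → a ^ d + 1 ≤ (a + 1) ^ d := by
  intro d
  induction d with
  | zero => intro h; omega
  | succ n ih =>
    intro _
    rcases Nat.eq_or_lt_of_le (Nat.one_le_iff_ne_zero.2 (Nat.succ_ne_zero n)) with h | h
    · have hn0 : n = 0 := by omega
      subst hn0; simp
    · have hn : 1 ≤ n := by omega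
      have h1 := ih hn
      have ha0 : (0:ℝ) ≤ a := by linarith
      have han : (1:ℝ) ≤ a ^ n := one_le_pow₀ ha
      calc a ^ (n+1) + 1 ≤ (a ^ n + 1) * (a + 1) := by ring_nf; nlinarith
        _ ≤ (a + 1) ^ n * (a + 1) := by nlinarith
        _ = (a + 1) ^ (n + 1) := by ring

lemma keyineq (d k : ℕ) (hd : 1 ≤ d) (hk : 2 ≤ k) (t : ℝ) (ht : 2 * d + 3 ≤ t) :
    (2 * (⌈Real.exp ((k:ℝ) ^ d)⌉₊ : ℝ) + 1) ^ d * Real.exp (-t * (2 * (k:ℝ) + 1) ^ d)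
      ≤ Real.exp (-t) * (1/2 : ℝ) ^ k := by
  set E : ℝ := Real.exp ((k:ℝ) ^ d) with hE
  have hE1 : 1 ≤ E := Real.one_le_exp (by positivity)
  have hceil : (⌈E⌉₊ : ℝ) ≤ E + 1 := le_of_lt (Nat.ceil_lt_add_one (by linarith))
  have h5 : 2 * (⌈E⌉₊ : ℝ) + 1 ≤ 5 * E := by linarith
  have he2 : (5:ℝ) ≤ Real.exp 2 := by
    have h1 : Real.exp 2 = Real.exp 1 * Real.exp 1 := by
      rw [← Real.exp_add]; norm_num
    nlinarith [Real.exp_one_gt_d9]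
  have hbound : 2 * (⌈E⌉₊ : ℝ) + 1 ≤ Real.exp (2 + (k:ℝ) ^ d) := by
    rw [Real.exp_add]
    calc 2 * (⌈E⌉₊ : ℝ) + 1 ≤ 5 * E := h5
      _ ≤ Real.exp 2 * E := by nlinarith
  have hpos : (0:ℝ) ≤ 2 * (⌈E⌉₊ : ℝ) + 1 := by positivity
  have hpow : (2 * (⌈E⌉₊ : ℝ) + 1) ^ d ≤ Real.exp ((d:ℝ) * (2 + (k:ℝ) ^ d)) := by
    calc (2 * (⌈E⌉₊ : ℝ) + 1) ^ d ≤ (Real.exp (2 + (k:ℝ) ^ d)) ^ d :=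
          pow_le_pow_left₀ hpos hbound d
      _ = Real.exp ((d:ℝ) * (2 + (k:ℝ) ^ d)) := by rw [← Real.exp_nat_mul]
  -- exponent inequality
  have hk1 : (1:ℝ) ≤ (k:ℝ) := by exact_mod_cast Nat.one_le_of_lt hk
  have hk2 : (2:ℝ) ≤ (k:ℝ) := by exact_mod_cast hk
  have hkd : (k:ℝ) ≤ (k:ℝ) ^ d := le_self_pow₀ hk1 (by omega)
  have h2d : (2:ℝ) ≤ (2:ℝ) ^ d := by
    calc (2:ℝ) = 2 ^ 1 := (pow_one 2).symm
      _ ≤ 2 ^ d := pow_le_pow_right₀ one_le_two hd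
  have hsplit : (2 * (k:ℝ)) ^ d + 1 ≤ (2 * (k:ℝ) + 1) ^ d := pow_add_one_le (by linarith) hd
  have h2kd : (2:ℝ) ^ d * (k:ℝ) ^ d ≤ (2 * (k:ℝ)) ^ d := by rw [mul_pow]
  have hd1 : (1:ℝ) ≤ (d:ℝ) := by exact_mod_cast hd
  have ht0 : (0:ℝ) ≤ t := by linarith
  have hkd1 : (1:ℝ) ≤ (k:ℝ) ^ d := one_le_pow₀ hk1
  have hexpo : (d:ℝ) * (2 + (k:ℝ) ^ d) + -t * (2 * (k:ℝ) + 1) ^ d ≤ -t + -(k:ℝ) := by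
    have c1 : t * (2 * (k:ℝ) ^ d + 1) ≤ t * ((2 * (k:ℝ) + 1) ^ d) := by
      apply mul_le_mul_of_nonneg_left _ ht0
      nlinarith
    have hA0 : (0:ℝ) ≤ (k:ℝ) ^ d := by positivity
    have h1 : (4 * (d:ℝ) + 6) * (k:ℝ) ^ d ≤ (2 * t) * (k:ℝ) ^ d :=
      mul_le_mul_of_nonneg_right (by linarith) hA0
    have h2 : (3 * (d:ℝ) + 6) * (k:ℝ) ≤ (3 * (d:ℝ) + 6) * (k:ℝ) ^ d :=
      mul_le_mul_of_nonneg_left hkd (by linarith)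
    have h3 : (3 * (d:ℝ) + 5) * 2 ≤ (3 * (d:ℝ) + 5) * (k:ℝ) :=
      mul_le_mul_of_nonneg_left hk2 (by linarith)
    nlinarith [c1, h1, h2, h3]
  calc (2 * (⌈E⌉₊ : ℝ) + 1) ^ d * Real.exp (-t * (2 * (k:ℝ) + 1) ^ d)
      ≤ Real.exp ((d:ℝ) * (2 + (k:ℝ) ^ d)) * Real.exp (-t * (2 * (k:ℝ) + 1) ^ d) := by
        apply mul_le_mul_of_nonneg_right hpow (Real.exp_pos _).le
    _ = Real.exp ((d:ℝ) * (2 + (k:ℝ) ^ d) + (-t * (2 * (k:ℝ) + 1) ^ d)) := by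
        rw [Real.exp_add]
    _ ≤ Real.exp (-t + (-(k:ℝ))) := by
        apply Real.exp_le_exp.2
        linarith [hexpo]
    _ = Real.exp (-t) * Real.exp (-(k:ℝ)) := Real.exp_add _ _
    _ ≤ Real.exp (-t) * (1/2 : ℝ) ^ k := by
        apply mul_le_mul_of_nonneg_left _ (Real.exp_pos _).le
        have : Real.exp (-(k:ℝ)) = (Real.exp (-1)) ^ k := by
          rw [← Real.exp_nat_mul]; congr 1; ring
        rw [this]
        apply pow_le_pow_left₀ (Real.exp_pos _).le
        rw [Real.exp_neg]
        have h2e : (2:ℝ) ≤ Real.exp 1 := by nlinarith [Real.exp_one_gt_d9]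
        rw [one_div]
        exact inv_anti₀ two_pos h2e

lemma tailbound {d : ℕ} (hd : 0 < d) (U : Polynomial ℝ) (K : ℝ)
    (ω : Measure (Conf d)) (Cw lam0 : ℝ) (hlam0 : 0 < lam0)
    (hss : Superstable U K ω Cw lam0) (N : ℝ)
    (hN : 2 * (d:ℝ) + 3 ≤ lam0 * N - Cw) :
    ω {x | ENNReal.ofReal N < Qen U K x} ≤ ENNReal.ofReal (2 * Real.exp (Cw - lam0 * N)) := by
  classical
  set t : ℝ := lam0 * N - Cw with htdef
  set L : Site d → ℝ := fun ν => Real.log (Real.exp 1 + (lnorm ν : ℝ)) with hLdef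
  set cond : Site d → ℕ → Prop := fun ν k => L ν ^ ((1:ℝ)/(d:ℝ)) < (k:ℝ) with hconddef
  have hdr : (0:ℝ) < d := by exact_mod_cast hd
  have hlnorm : ∀ ν : Site d, (0:ℝ) ≤ (lnorm ν : ℝ) := by
    intro ν
    have : (0:ℤ) ≤ lnorm ν := Finset.sum_nonneg fun ℓ _ => abs_nonneg (ν ℓ)
    exact_mod_cast this
  have hL1 : ∀ ν, 1 ≤ L ν := by
    intro ν
    calc (1:ℝ) = Real.log (Real.exp 1) := (Real.log_exp 1).symm
      _ ≤ L ν := Real.log_le_log (Real.exp_pos 1) (by linarith [hlnorm ν])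
  have hcond_k : ∀ ν k, cond ν k → 2 ≤ k := by
    intro ν k h
    have h1 : (1:ℝ) ≤ L ν ^ ((1:ℝ)/(d:ℝ)) := Real.one_le_rpow (hL1 ν) (by positivity)
    have h2 : (1:ℝ) < (k:ℝ) := lt_of_le_of_lt h1 h
    have : 1 < k := by exact_mod_cast h2
    omega
  have hcond_cube : ∀ ν k, cond ν k → ν ∈ cube (0:Site d) ⌈Real.exp ((k:ℝ)^d)⌉₊ := by
    intro ν k h
    have h0 : (0:ℝ) ≤ L ν := by linarith [hL1 ν]
    have hkey : (L ν ^ ((1:ℝ)/(d:ℝ))) ^ (d:ℕ) = L ν := by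
      rw [← Real.rpow_natCast (L ν ^ ((1:ℝ)/(d:ℝ))) d, ← Real.rpow_mul h0, one_div,
        inv_mul_cancel₀ (ne_of_gt hdr), Real.rpow_one]
    have hL2 : L ν < (k:ℝ)^d := by
      have := pow_lt_pow_left₀ h (Real.rpow_nonneg h0 _) (Nat.pos_iff_ne_zero.1 hd)
      rwa [hkey] at this
    have hlt : Real.exp 1 + (lnorm ν : ℝ) < Real.exp ((k:ℝ)^d) :=
      (Real.log_lt_iff_lt_exp (by linarith [hlnorm ν, Real.exp_pos 1])).1 hL2
    have hceil : (lnorm ν : ℝ) ≤ (⌈Real.exp ((k:ℝ)^d)⌉₊ : ℝ) := by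
      have := Real.exp_pos 1
      linarith [Nat.le_ceil (Real.exp ((k:ℝ)^d))]
    have hceilZ : lnorm ν ≤ (⌈Real.exp ((k:ℝ)^d)⌉₊ : ℤ) := by exact_mod_cast hceil
    rw [cube, Fintype.mem_piFinset]
    intro ℓ
    rw [Finset.mem_Icc]
    have h1 : |ν ℓ| ≤ lnorm ν :=
      Finset.single_le_sum (f := fun ℓ => |ν ℓ|) (fun i _ => abs_nonneg (ν i))
        (Finset.mem_univ ℓ)
    have h2 : |ν ℓ| ≤ (⌈Real.exp ((k:ℝ)^d)⌉₊ : ℤ) := le_trans h1 hceilZ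
    have := abs_le.1 h2
    simp only [Pi.zero_apply, zero_sub, zero_add]
    exact this
  set A : Site d × ℕ → Set (Conf d) := fun p =>
    {x | cond p.1 p.2 ∧ N * (2*(p.2:ℝ)+1)^d < Wen U K p.1 p.2 x} with hAdef
  have hsub : {x | ENNReal.ofReal N < Qen U K x} ⊆ ⋃ p, A p := by
    intro x hx
    simp only [Set.mem_setOf_eq, Qen, lt_iSup_iff] at hx
    obtain ⟨ν, k, hc, hlt⟩ := hx
    have h1 : N < Wen U K ν k x / (2*(k:ℝ)+1)^d := by
      by_contra hcon
      push_neg at hcon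
      exact absurd (ENNReal.ofReal_le_ofReal hcon) (not_le.2 hlt)
    have hV : (0:ℝ) < (2*(k:ℝ)+1)^d := by positivity
    exact Set.mem_iUnion.2 ⟨(ν,k), hc, (lt_div_iff₀ hV).1 h1⟩
  set B : Site d × ℕ → ℝ≥0∞ := fun p =>
    if cond p.1 p.2 then ENNReal.ofReal (Real.exp ((Cw - lam0*N) * (2*(p.2:ℝ)+1)^d)) else 0
    with hBdef
  have step1 : ω {x | ENNReal.ofReal N < Qen U K x} ≤ ∑' p : Site d × ℕ, B p := by
    refine le_trans (le_trans (measure_mono hsub) (measure_iUnion_le A)) ?_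
    refine ENNReal.tsum_le_tsum fun p => ?_
    by_cases hc : cond p.1 p.2
    · simp only [hBdef, hc, if_true]
      refine le_trans (measure_mono fun x hx => hx.2) (cheby U K ω Cw lam0 hlam0 hss p.1 p.2 N)
    · have : A p = ∅ := by
        ext x; simp [hAdef, hc]
      simp [hBdef, this, hc]
  have ht' : 2 * (d:ℝ) + 3 ≤ t := hN
  have step2 : ∀ k : ℕ, (∑' ν : Site d, B (ν, k))
      ≤ ENNReal.ofReal (Real.exp (-t)) * ENNReal.ofReal (1/2:ℝ) ^ k := by
    intro k
    by_cases h2 : 2 ≤ k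
    · set M : ℕ := ⌈Real.exp ((k:ℝ)^d)⌉₊ with hM
      set c0 : ℝ≥0∞ := ENNReal.ofReal (Real.exp ((Cw - lam0*N) * (2*(k:ℝ)+1)^d)) with hc0
      have hler : (∑' ν : Site d, B (ν, k)) ≤
          ∑' ν : Site d, (if ν ∈ cube (0:Site d) M then c0 else 0) := by
        refine ENNReal.tsum_le_tsum fun ν => ?_
        by_cases hc : cond ν k
        · simp only [hBdef, hc, if_true, hcond_cube ν k hc, hc0]
          exact le_of_eq (if_pos (hcond_cube ν k hc)).symm
        · simp [hBdef, hc]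
      have heq : (∑' ν : Site d, (if ν ∈ cube (0:Site d) M then c0 else 0))
          = ((2 * M + 1) ^ d : ℕ) * c0 := by
        rw [tsum_eq_sum (s := cube (0:Site d) M) (fun ν hν => if_neg hν),
          Finset.sum_congr rfl (fun ν hν => if_pos hν), Finset.sum_const, card_cube,
          nsmul_eq_mul]
      have hfin : ((2 * M + 1) ^ d : ℕ) * c0
          ≤ ENNReal.ofReal (Real.exp (-t)) * ENNReal.ofReal (1/2:ℝ) ^ k := by
        have hcast : (((2 * M + 1) ^ d : ℕ) : ℝ≥0∞) * c0
            = ENNReal.ofReal ((2 * (M:ℝ) + 1) ^ d * Real.exp ((Cw - lam0*N) * (2*(k:ℝ)+1)^d)) := by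
          rw [hc0, ← ENNReal.ofReal_natCast, ← ENNReal.ofReal_mul (by positivity)]
          push_cast
          ring_nf
        rw [hcast, ← ENNReal.ofReal_pow (by norm_num : (0:ℝ) ≤ 1/2),
          ← ENNReal.ofReal_mul (Real.exp_pos _).le]
        apply ENNReal.ofReal_le_ofReal
        have hCwt : Cw - lam0 * N = -t := by rw [htdef]; ring
        rw [hCwt]
        exact keyineq d k hd h2 t ht'
      calc (∑' ν : Site d, B (ν, k)) ≤ _ := hler
        _ = _ := heq
        _ ≤ _ := hfin
    · have hz : ∀ ν : Site d, B (ν, k) = 0 := by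
        intro ν
        rw [hBdef]
        exact if_neg fun hc => h2 (hcond_k ν k hc)
      simp [hz]
  have hhalf : ENNReal.ofReal (1/2:ℝ) = 2⁻¹ := by
    rw [one_div, ENNReal.ofReal_inv_of_pos two_pos]
    norm_num
  have step3 : (∑' p : Site d × ℕ, B p) ≤ ENNReal.ofReal (2 * Real.exp (Cw - lam0 * N)) := by
    have hprod : (∑' p : Site d × ℕ, B p) = ∑' ν : Site d, ∑' k : ℕ, B (ν, k) :=
      ENNReal.tsum_prod (f := fun ν k => B (ν, k))
    calc (∑' p : Site d × ℕ, B p) = ∑' ν : Site d, ∑' k : ℕ, B (ν, k) := hprod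
      _ = ∑' k : ℕ, ∑' ν : Site d, B (ν, k) := ENNReal.tsum_comm
      _ ≤ ∑' k : ℕ, ENNReal.ofReal (Real.exp (-t)) * ENNReal.ofReal (1/2:ℝ) ^ k :=
          ENNReal.tsum_le_tsum step2
      _ = ENNReal.ofReal (Real.exp (-t)) * ∑' k : ℕ, ENNReal.ofReal (1/2:ℝ) ^ k :=
          ENNReal.tsum_mul_left
      _ = ENNReal.ofReal (Real.exp (-t)) * 2 := by
          rw [hhalf, ENNReal.tsum_geometric, ENNReal.one_sub_inv_two, inv_inv]
      _ = ENNReal.ofReal (2 * Real.exp (Cw - lam0 * N)) := by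
          have hCwt : Cw - lam0 * N = -t := by rw [htdef]; ring
          rw [hCwt, ENNReal.ofReal_mul (by norm_num : (0:ℝ) ≤ 2), mul_comm]
          norm_num
  exact le_trans step1 step3

/-- Exponential tail estimate: for every sufficiently small `λ > 0`,
`e^{λN} ω(Q > N) → 0` as `N → ∞`. -/
theorem statement3 {d : ℕ} (hd : 0 < d) (U : Polynomial ℝ) (hUdeg : U.degree = 4)
    (hUpos : ∀ y : ℝ, 0 ≤ U.eval y) (hUlead : 0 < U.leadingCoeff)
    (K : ℝ) (hK : 0 < K)
    (ω : Measure (Conf d)) [IsProbabilityMeasure ω]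
    (Cw lam0 : ℝ) (hCw : 0 < Cw) (hlam0 : 0 < lam0)
    (hss : Superstable U K ω Cw lam0) :
    ∃ lam1 > (0:ℝ), ∀ lam : ℝ, 0 < lam → lam ≤ lam1 →
      Tendsto (fun N : ℝ =>
          Real.exp (lam * N) * (ω {x | ENNReal.ofReal N < Qen U K x}).toReal)
        atTop (nhds 0) := by
  refine ⟨lam0 / 2, by positivity, ?_⟩
  intro lam hlam hlam2
  set g : ℝ → ℝ := fun N => 2 * Real.exp (Cw + (lam - lam0) * N) with hg
  have hgten : Tendsto g atTop (nhds 0) := by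
    have h1 : Tendsto (fun N : ℝ => (lam - lam0) * N) atTop atBot :=
      (tendsto_const_mul_atBot_of_neg (by linarith)).2 tendsto_id
    have h2 : Tendsto (fun N : ℝ => Cw + (lam - lam0) * N) atTop atBot :=
      tendsto_atBot_add_const_left _ Cw h1
    have h3 : Tendsto (fun N : ℝ => Real.exp (Cw + (lam - lam0) * N)) atTop (nhds 0) :=
      Real.tendsto_exp_atBot.comp h2
    simpa using h3.const_mul 2
  refine squeeze_zero' (Eventually.of_forall fun N => ?_) ?_ hgten
  · exact mul_nonneg (Real.exp_pos _).le ENNReal.toReal_nonneg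
  · filter_upwards [eventually_ge_atTop ((Cw + 2 * (d:ℝ) + 3) / lam0)] with N hN
    have hN' : 2 * (d:ℝ) + 3 ≤ lam0 * N - Cw := by
      rw [div_le_iff₀ hlam0] at hN
      linarith
    have hb := tailbound hd U K ω Cw lam0 hlam0 hss N hN'
    have h4 : (ω {x | ENNReal.ofReal N < Qen U K x}).toReal ≤ 2 * Real.exp (Cw - lam0 * N) := by
      have := ENNReal.toReal_mono ENNReal.ofReal_ne_top hb
      rwa [ENNReal.toReal_ofReal (by positivity)] at this
    calc Real.exp (lam * N) * (ω {x | ENNReal.ofReal N < Qen U K x}).toReal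
        ≤ Real.exp (lam * N) * (2 * Real.exp (Cw - lam0 * N)) :=
          mul_le_mul_of_nonneg_left h4 (Real.exp_pos _).le
      _ = g N := by
          rw [hg]
          rw [show Real.exp (lam * N) * (2 * Real.exp (Cw - lam0 * N))
            = 2 * (Real.exp (lam * N) * Real.exp (Cw - lam0 * N)) by ring,
            ← Real.exp_add]
          congr 2
          ring
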